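/- Let m, k ≥ 1, n = m + k, and let the constraints be linear: α_ν = Σ_{j=1}^m a_{ν,j}(q₁,…,qₙ, t) q̇_j with C² coefficients a_{ν,j}, ν = 1,…,k. Let T be a C² kinetic energy, T* its restriction obtained by substituting q̇_{m+ν} = α_ν, U a C² potential of (q₁,…,qₙ,t), L* := T* + U, and define B_i^ν as in the Voronec-type formalism. Then along every C² admissible curve q(t) (q̇_{m+ν} = α_ν along the curve) satisfying the equations of motion d/dt(∂T*/∂q̇_i) − ∂T*/∂q_i − Σ_{ν=1}^k (∂T*/∂q_{m+ν}) a_{ν,i} − Σ_{ν=1}^k B_i^ν ∂T/∂q̇_{m+ν} = ∂U/∂q_i + Σ_{ν=1}^k a_{ν,i} ∂U/∂q_{m+ν} for i = 1,…,m, one has: d/dt( Σ_{i=1}^m q̇_i ∂L*/∂q̇_i − L* ) = − ∂L*/∂t + Σ_{ν=1}^k Σ_{i=1}^m q̇_i (∂T/∂q̇_{m+ν}) (∂a_{ν,i}/∂t). -/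

import Mathlib

open scoped BigOperators

noncomputable section

/-- A phase point: positions `q ∈ ℝⁿ`, independent velocities `v ∈ ℝᵐ`, and time `t`. -/
abbrev PhasePt (n m : ℕ) : Type := (Fin n → ℝ) × (Fin m → ℝ) × ℝ

/-- Partial derivative of `f : PhasePt n m → ℝ` with respect to the coordinate `q i`. -/
def pq {n m : ℕ} (f : PhasePt n m → ℝ) (i : Fin n) (p : PhasePt n m) : ℝ :=
  fderiv ℝ f p (Pi.single i 1, 0, 0)

/-- Partial derivative with respect to the independent velocity `q̇ r`. -/
def pv {n m : ℕ} (f : PhasePt n m → ℝ) (r : Fin m) (p : PhasePt n m) : ℝ :=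
  fderiv ℝ f p (0, Pi.single r 1, 0)

/-- Partial derivative with respect to time. -/
def ptime {n m : ℕ} (f : PhasePt n m → ℝ) (p : PhasePt n m) : ℝ :=
  fderiv ℝ f p (0, 0, 1)

variable {m k : ℕ}

/-- The independent velocities `q̇ 1, …, q̇ m` along a curve. -/
def ivel (q : ℝ → Fin (m + k) → ℝ) (t : ℝ) : Fin m → ℝ :=
  fun i => deriv q t (Fin.castAdd k i)

/-- The second derivatives `q̈ r` of the independent coordinates along a curve. -/
def iacc (q : ℝ → Fin (m + k) → ℝ) (t : ℝ) : Fin m → ℝ :=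
  fun i => deriv (deriv q) t (Fin.castAdd k i)

/-- The phase-space lift `(q(t), q̇ ₁(t),…,q̇ _m(t), t)` of a curve. -/
def plift (q : ℝ → Fin (m + k) → ℝ) (t : ℝ) : PhasePt (m + k) m :=
  (q t, ivel q t, t)

/-- A curve is admissible when the constraints `q̇ (m+ν) = α ν` hold along it. -/
def Admissible (α : Fin k → PhasePt (m + k) m → ℝ) (q : ℝ → Fin (m + k) → ℝ) : Prop :=
  ∀ (t : ℝ) (ν : Fin k), deriv q t (Fin.natAdd m ν) = α ν (plift q t)

/-- `ᾱ ν := ∑ i q̇ i ∂α ν/∂q̇ i`. -/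
def abar (α : Fin k → PhasePt (m + k) m → ℝ) (ν : Fin k) (p : PhasePt (m + k) m) : ℝ :=
  ∑ i : Fin m, p.2.1 i * pv (α ν) i p

/-- The Voronec coefficient `B i ν` (formula (11) of the paper), along a curve. -/
def Bcoef (α : Fin k → PhasePt (m + k) m → ℝ) (q : ℝ → Fin (m + k) → ℝ)
    (t : ℝ) (ν : Fin k) (i : Fin m) : ℝ :=
  (∑ r : Fin m, (pq (pv (α ν) i) (Fin.castAdd k r) (plift q t) * ivel q t r
      + pv (pv (α ν) i) r (plift q t) * iacc q t r))
  - pq (α ν) (Fin.castAdd k i) (plift q t)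
  + (∑ μ : Fin k, (pq (pv (α ν) i) (Fin.natAdd m μ) (plift q t) * α μ (plift q t)
      - pv (α μ) i (plift q t) * pq (α ν) (Fin.natAdd m μ) (plift q t)))
  + ptime (pv (α ν) i) (plift q t)

/-- The coefficient `B̄ ν` (formula (15) of the paper), along a curve. -/
def Bbar (α : Fin k → PhasePt (m + k) m → ℝ) (q : ℝ → Fin (m + k) → ℝ)
    (t : ℝ) (ν : Fin k) : ℝ :=
  (∑ r : Fin m, ivel q t r *
      (pq (abar α ν) (Fin.castAdd k r) (plift q t) - pq (α ν) (Fin.castAdd k r) (plift q t)))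
  + (∑ μ : Fin k, (α μ (plift q t) * pq (abar α ν) (Fin.natAdd m μ) (plift q t)
      - abar α μ (plift q t) * pq (α ν) (Fin.natAdd m μ) (plift q t)))
  + (∑ r : Fin m, iacc q t r * (pv (abar α ν) r (plift q t) - pv (α ν) r (plift q t)))
  + ptime (abar α ν) (plift q t)

/-- The full velocity vector `(q̇ ₁,…,q̇ _m, α₁,…,α_k)` obtained from a phase point. -/
def extVel (α : Fin k → PhasePt (m + k) m → ℝ) (p : PhasePt (m + k) m) : Fin (m + k) → ℝ :=
  Fin.append p.2.1 (fun ν => α ν p)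

/-- Restriction `T*` of a kinetic energy `T` by substituting `q̇ (m+ν) = α ν`. -/
def subst (α : Fin k → PhasePt (m + k) m → ℝ) (T : PhasePt (m + k) (m + k) → ℝ)
    (p : PhasePt (m + k) m) : ℝ :=
  T (p.1, extVel α p, p.2.2)

/-- `∂T/∂q̇ (m+ν)` with the dependent velocities replaced by `α₁, …, α_k`. -/
def pvT (α : Fin k → PhasePt (m + k) m → ℝ) (T : PhasePt (m + k) (m + k) → ℝ)
    (ν : Fin k) (p : PhasePt (m + k) m) : ℝ :=
  pv T (Fin.natAdd m ν) (p.1, extVel α p, p.2.2)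

/-- Partial derivative of a potential `U(q, t)` with respect to `q j`. -/
def pqU {n : ℕ} (U : (Fin n → ℝ) × ℝ → ℝ) (j : Fin n) (p : (Fin n → ℝ) × ℝ) : ℝ :=
  fderiv ℝ U p (Pi.single j 1, 0)

/-- Partial derivative of a potential `U(q, t)` with respect to time. -/
def ptU {n : ℕ} (U : (Fin n → ℝ) × ℝ → ℝ) (p : (Fin n → ℝ) × ℝ) : ℝ :=
  fderiv ℝ U p (0, 1)

/-- The Lagrangian `L* = T* + U` in terms of the independent velocities. -/
def Lag (α : Fin k → PhasePt (m + k) m → ℝ) (T : PhasePt (m + k) (m + k) → ℝ)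
    (U : (Fin (m + k) → ℝ) × ℝ → ℝ) (p : PhasePt (m + k) m) : ℝ :=
  subst α T p + U (p.1, p.2.2)

/-- The energy `∑ i q̇ i ∂L*/∂q̇ i − L*` of a function `L*` along a curve. -/
def energy (L : PhasePt (m + k) m → ℝ) (q : ℝ → Fin (m + k) → ℝ) (t : ℝ) : ℝ :=
  (∑ i : Fin m, ivel q t i * pv L i (plift q t)) - L (plift q t)


section Aux
variable {n : ℕ}

lemma vec_decomp (u : Fin n → ℝ) (w : Fin m → ℝ) (c : ℝ) :
    ((u, w, c) : PhasePt n m) =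
      (∑ j : Fin n, u j • (((Pi.single j 1 : Fin n → ℝ), 0, 0) : PhasePt n m))
      + (∑ i : Fin m, w i • (((0 : Fin n → ℝ), Pi.single i 1, 0) : PhasePt n m))
      + c • (((0 : Fin n → ℝ), 0, 1) : PhasePt n m) := by
  refine Prod.ext ?_ (Prod.ext ?_ ?_) <;>
    simp [Prod.fst_sum, Prod.snd_sum, Prod.smul_mk, ← Pi.single_smul]
  · exact (Finset.univ_sum_single u).symm
  · exact (Finset.univ_sum_single w).symm

lemma fderiv_apply_decomp (f : PhasePt n m → ℝ) (p : PhasePt n m)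
    (hf : DifferentiableAt ℝ f p) (u : Fin n → ℝ) (w : Fin m → ℝ) (c : ℝ) :
    fderiv ℝ f p (u, w, c) =
      (∑ j : Fin n, u j * pq f j p) + (∑ i : Fin m, w i * pv f i p) + c * ptime f p := by
  rw [vec_decomp u w c]
  have h1 : ∀ j : Fin n, ((u j • (Pi.single j 1 : Fin n → ℝ)), (0 : (Fin m → ℝ) × ℝ))
      = u j • (((Pi.single j 1 : Fin n → ℝ), 0, 0) : PhasePt n m) := fun j => by
    simp [Prod.smul_mk]; rfl
  have h2 : ∀ i : Fin m, (((0 : Fin n → ℝ)), ((w i • (Pi.single i 1 : Fin m → ℝ)), (0:ℝ)))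
      = w i • (((0 : Fin n → ℝ), Pi.single i 1, 0) : PhasePt n m) := fun i => by
    simp [Prod.smul_mk]
  have h3 : (((0 : Fin n → ℝ)), ((0 : Fin m → ℝ), c))
      = c • (((0 : Fin n → ℝ), 0, 1) : PhasePt n m) := by simp [Prod.smul_mk]
  simp only [pq, pv, ptime, map_add, map_sum, h1, h2, h3, map_smul, smul_eq_mul]
end Aux
section Curve
variable {q : ℝ → Fin (m + k) → ℝ}

lemma deriv_contDiff (hq : ContDiff ℝ 2 q) : ContDiff ℝ 1 (deriv q) := by
  rw [show (2 : WithTop ℕ∞) = 1 + 1 from rfl] at hq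
  exact (contDiff_succ_iff_deriv.mp hq).2.2

def restr (m k : ℕ) : (Fin (m + k) → ℝ) →L[ℝ] (Fin m → ℝ) :=
  ContinuousLinearMap.pi (fun i => ContinuousLinearMap.proj (Fin.castAdd k i))

lemma hasDerivAt_ivel (hq : ContDiff ℝ 2 q) (t : ℝ) :
    HasDerivAt (ivel q) (iacc q t) t := by
  have h1 : HasDerivAt (deriv q) (deriv (deriv q) t) t :=
    ((deriv_contDiff hq).differentiable one_ne_zero t).hasDerivAt
  have h2 := (restr m k).hasFDerivAt.comp_hasDerivAt t h1
  exact h2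

lemma hasDerivAt_plift (hq : ContDiff ℝ 2 q) (t : ℝ) :
    HasDerivAt (plift q) (deriv q t, iacc q t, 1) t := by
  have h0 : HasDerivAt q (deriv q t) t :=
    ((hq.differentiable (by norm_num)) t).hasDerivAt
  exact h0.prodMk ((hasDerivAt_ivel hq t).prodMk (hasDerivAt_id t))

lemma hasDerivAt_comp_plift (hq : ContDiff ℝ 2 q) (t : ℝ) (f : PhasePt (m + k) m → ℝ)
    (hf : DifferentiableAt ℝ f (plift q t)) :
    HasDerivAt (fun s => f (plift q s))
      ((∑ j : Fin (m + k), deriv q t j * pq f j (plift q t))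
        + (∑ i : Fin m, iacc q t i * pv f i (plift q t)) + ptime f (plift q t)) t := by
  have h := hf.hasFDerivAt.comp_hasDerivAt t (hasDerivAt_plift hq t)
  have hval := fderiv_apply_decomp f (plift q t) hf (deriv q t) (iacc q t) 1
  rw [one_mul] at hval
  rw [← hval]
  exact h

end Curve
section Pullback
variable {n : ℕ}

/-- The projection `(q, v, t) ↦ (q, t)` as a continuous linear map. -/
def projQT (n m : ℕ) : PhasePt n m →L[ℝ] (Fin n → ℝ) × ℝ :=
  (ContinuousLinearMap.fst ℝ (Fin n → ℝ) ((Fin m → ℝ) × ℝ)).prod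
    ((ContinuousLinearMap.snd ℝ (Fin m → ℝ) ℝ).comp
      (ContinuousLinearMap.snd ℝ (Fin n → ℝ) ((Fin m → ℝ) × ℝ)))

lemma projQT_apply (p : PhasePt n m) : projQT n m p = (p.1, p.2.2) := rfl

/-- The projection `(q, v, t) ↦ v j` as a continuous linear map. -/
def projV (n m : ℕ) (j : Fin m) : PhasePt n m →L[ℝ] ℝ :=
  (ContinuousLinearMap.proj j).comp
    ((ContinuousLinearMap.fst ℝ (Fin m → ℝ) ℝ).comp
      (ContinuousLinearMap.snd ℝ (Fin n → ℝ) ((Fin m → ℝ) × ℝ)))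

lemma projV_apply (p : PhasePt n m) (j : Fin m) : projV n m j p = p.2.1 j := rfl

lemma fderiv_pull (h : (Fin n → ℝ) × ℝ → ℝ) (p : PhasePt n m)
    (hh : DifferentiableAt ℝ h (p.1, p.2.2)) (dir : PhasePt n m) :
    fderiv ℝ (fun p : PhasePt n m => h (p.1, p.2.2)) p dir
      = fderiv ℝ h (p.1, p.2.2) (dir.1, dir.2.2) := by
  have hG : DifferentiableAt ℝ (projQT n m) p := (projQT n m).differentiableAt
  have : (fun p : PhasePt n m => h (p.1, p.2.2)) = h ∘ (projQT n m) := rfl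
  rw [this, fderiv_comp p (by simpa [projQT_apply] using hh) hG]
  simp [projQT_apply, (projQT n m).fderiv]

lemma pq_pull (h : (Fin n → ℝ) × ℝ → ℝ) (p : PhasePt n m) (j : Fin n)
    (hh : DifferentiableAt ℝ h (p.1, p.2.2)) :
    pq (fun p : PhasePt n m => h (p.1, p.2.2)) j p = pqU h j (p.1, p.2.2) := by
  rw [pq, fderiv_pull h p hh]; rfl

lemma pv_pull (h : (Fin n → ℝ) × ℝ → ℝ) (p : PhasePt n m) (r : Fin m)
    (hh : DifferentiableAt ℝ h (p.1, p.2.2)) :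
    pv (fun p : PhasePt n m => h (p.1, p.2.2)) r p = 0 := by
  rw [pv, fderiv_pull h p hh]
  exact (fderiv ℝ h (p.1, p.2.2)).map_zero

lemma ptime_pull (h : (Fin n → ℝ) × ℝ → ℝ) (p : PhasePt n m)
    (hh : DifferentiableAt ℝ h (p.1, p.2.2)) :
    ptime (fun p : PhasePt n m => h (p.1, p.2.2)) p = ptU h (p.1, p.2.2) := by
  rw [ptime, fderiv_pull h p hh]; rfl

lemma fderiv_add_apply {E : Type*} [NormedAddCommGroup E] [NormedSpace ℝ E]
    (f g : E → ℝ) (p dir : E) (hf : DifferentiableAt ℝ f p) (hg : DifferentiableAt ℝ g p) :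
    fderiv ℝ (fun x => f x + g x) p dir = fderiv ℝ f p dir + fderiv ℝ g p dir := by
  rw [fderiv_fun_add hf hg]; rfl

end Pullback
section Alpha
variable {a : Fin k → Fin m → (Fin (m + k) → ℝ) × ℝ → ℝ}
  {α : Fin k → PhasePt (m + k) m → ℝ}

lemma term_contDiff (ha : ∀ ν j, ContDiff ℝ 2 (a ν j)) (ν : Fin k) (j : Fin m) :
    ContDiff ℝ 2 (fun p : PhasePt (m + k) m => a ν j (p.1, p.2.2) * p.2.1 j) :=
  ((ha ν j).comp (projQT (m + k) m).contDiff).mul (projV (m + k) m j).contDiff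

lemma alpha_contDiff (ha : ∀ ν j, ContDiff ℝ 2 (a ν j))
    (hαdef : ∀ ν p, α ν p = ∑ j : Fin m, a ν j (p.1, p.2.2) * p.2.1 j) (ν : Fin k) :
    ContDiff ℝ 2 (α ν) := by
  have : α ν = fun p => ∑ j : Fin m, a ν j (p.1, p.2.2) * p.2.1 j := funext (hαdef ν)
  rw [this]; exact ContDiff.sum (fun j _ => term_contDiff ha ν j)

lemma fderiv_alpha (ha : ∀ ν j, ContDiff ℝ 2 (a ν j))
    (hαdef : ∀ ν p, α ν p = ∑ j : Fin m, a ν j (p.1, p.2.2) * p.2.1 j)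
    (ν : Fin k) (p : PhasePt (m + k) m) (dir : PhasePt (m + k) m) :
    fderiv ℝ (α ν) p dir
      = ∑ j : Fin m, (fderiv ℝ (a ν j) (p.1, p.2.2) (dir.1, dir.2.2) * p.2.1 j
        + a ν j (p.1, p.2.2) * dir.2.1 j) := by
  have hfun : α ν = fun p => ∑ j : Fin m, a ν j (p.1, p.2.2) * p.2.1 j := funext (hαdef ν)
  rw [hfun,
    fderiv_fun_sum (fun j _ => (term_contDiff ha ν j).differentiable (by norm_num) p),
    ContinuousLinearMap.sum_apply]
  refine Finset.sum_congr rfl fun j _ => ?_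
  have hu : DifferentiableAt ℝ (fun p : PhasePt (m + k) m => a ν j (p.1, p.2.2)) p :=
    ((ha ν j).comp (projQT (m + k) m).contDiff).differentiable (by norm_num) p
  have hv : DifferentiableAt ℝ (fun p : PhasePt (m + k) m => p.2.1 j) p :=
    (projV (m + k) m j).differentiableAt
  rw [fderiv_fun_mul hu hv, ContinuousLinearMap.add_apply, ContinuousLinearMap.smul_apply,
    ContinuousLinearMap.smul_apply]
  have h1 : fderiv ℝ (fun p : PhasePt (m + k) m => p.2.1 j) p dir = dir.2.1 j := by
    have : (fun p : PhasePt (m + k) m => p.2.1 j) = projV (m + k) m j := rfl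
    rw [this, (projV (m + k) m j).fderiv]; rfl
  have h2 : fderiv ℝ (fun p : PhasePt (m + k) m => a ν j (p.1, p.2.2)) p dir
      = fderiv ℝ (a ν j) (p.1, p.2.2) (dir.1, dir.2.2) :=
    fderiv_pull (a ν j) p ((ha ν j).differentiable (by norm_num) _) dir
  rw [h1, h2, smul_eq_mul, smul_eq_mul]; ring

lemma pv_alpha (ha : ∀ ν j, ContDiff ℝ 2 (a ν j))
    (hαdef : ∀ ν p, α ν p = ∑ j : Fin m, a ν j (p.1, p.2.2) * p.2.1 j)
    (ν : Fin k) (i : Fin m) (p : PhasePt (m + k) m) :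
    pv (α ν) i p = a ν i (p.1, p.2.2) := by
  rw [pv, fderiv_alpha ha hαdef]
  simp [Prod.mk_zero_zero, Pi.single_apply]

lemma pq_alpha (ha : ∀ ν j, ContDiff ℝ 2 (a ν j))
    (hαdef : ∀ ν p, α ν p = ∑ j : Fin m, a ν j (p.1, p.2.2) * p.2.1 j)
    (ν : Fin k) (jj : Fin (m + k)) (p : PhasePt (m + k) m) :
    pq (α ν) jj p = ∑ r : Fin m, pqU (a ν r) jj (p.1, p.2.2) * p.2.1 r := by
  rw [pq, fderiv_alpha ha hαdef]
  simp [pqU]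

lemma pvalpha_funext (ha : ∀ ν j, ContDiff ℝ 2 (a ν j))
    (hαdef : ∀ ν p, α ν p = ∑ j : Fin m, a ν j (p.1, p.2.2) * p.2.1 j)
    (ν : Fin k) (i : Fin m) :
    pv (α ν) i = fun p : PhasePt (m + k) m => a ν i (p.1, p.2.2) :=
  funext (pv_alpha ha hαdef ν i)

end Alpha
section BcoefSimp
variable {a : Fin k → Fin m → (Fin (m + k) → ℝ) × ℝ → ℝ}
  {α : Fin k → PhasePt (m + k) m → ℝ}

lemma pq_pvalpha (ha : ∀ ν j, ContDiff ℝ 2 (a ν j))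
    (hαdef : ∀ ν p, α ν p = ∑ j : Fin m, a ν j (p.1, p.2.2) * p.2.1 j)
    (ν : Fin k) (i : Fin m) (jj : Fin (m + k)) (p : PhasePt (m + k) m) :
    pq (pv (α ν) i) jj p = pqU (a ν i) jj (p.1, p.2.2) := by
  rw [pvalpha_funext ha hαdef]
  exact pq_pull _ _ _ ((ha ν i).differentiable (by norm_num) _)

lemma pv_pvalpha (ha : ∀ ν j, ContDiff ℝ 2 (a ν j))
    (hαdef : ∀ ν p, α ν p = ∑ j : Fin m, a ν j (p.1, p.2.2) * p.2.1 j)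
    (ν : Fin k) (i : Fin m) (r : Fin m) (p : PhasePt (m + k) m) :
    pv (pv (α ν) i) r p = 0 := by
  rw [pvalpha_funext ha hαdef]
  exact pv_pull _ _ _ ((ha ν i).differentiable (by norm_num) _)

lemma ptime_pvalpha (ha : ∀ ν j, ContDiff ℝ 2 (a ν j))
    (hαdef : ∀ ν p, α ν p = ∑ j : Fin m, a ν j (p.1, p.2.2) * p.2.1 j)
    (ν : Fin k) (i : Fin m) (p : PhasePt (m + k) m) :
    ptime (pv (α ν) i) p = ptU (a ν i) (p.1, p.2.2) := by
  rw [pvalpha_funext ha hαdef]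
  exact ptime_pull _ _ ((ha ν i).differentiable (by norm_num) _)

lemma alg_cancel {m k : ℕ} (v : Fin m → ℝ) (A : Fin m → Fin m → ℝ)
    (C : Fin m → Fin k → ℝ) (aa : Fin k → Fin m → ℝ) (D : Fin m → ℝ) :
    ∑ i : Fin m, v i * ((∑ r : Fin m, A i r * v r) - (∑ r : Fin m, A r i * v r)
        + (∑ μ : Fin k, (C i μ * (∑ r : Fin m, aa μ r * v r)
            - aa μ i * (∑ r : Fin m, C r μ * v r)))
        + D i)
      = ∑ i : Fin m, v i * D i := by
  have h1 : (∑ i : Fin m, v i * ∑ r : Fin m, A i r * v r)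
      = ∑ i : Fin m, v i * ∑ r : Fin m, A r i * v r := by
    simp only [Finset.mul_sum]
    rw [Finset.sum_comm]
    exact Finset.sum_congr rfl fun i _ => Finset.sum_congr rfl fun r _ => by ring
  have key : ∀ μ : Fin k, (∑ i : Fin m, v i * (C i μ * (∑ r : Fin m, aa μ r * v r)))
      = ∑ i : Fin m, v i * (aa μ i * (∑ r : Fin m, C r μ * v r)) := by
    intro μ
    have e1 : (∑ i : Fin m, v i * (C i μ * (∑ r : Fin m, aa μ r * v r)))
        = (∑ i : Fin m, v i * C i μ) * (∑ r : Fin m, aa μ r * v r) := by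
      rw [Finset.sum_mul]
      exact Finset.sum_congr rfl fun i _ => by ring
    have e2 : (∑ i : Fin m, v i * (aa μ i * (∑ r : Fin m, C r μ * v r)))
        = (∑ i : Fin m, v i * aa μ i) * (∑ r : Fin m, C r μ * v r) := by
      rw [Finset.sum_mul]
      exact Finset.sum_congr rfl fun i _ => by ring
    have e3 : (∑ r : Fin m, aa μ r * v r) = ∑ i : Fin m, v i * aa μ i :=
      Finset.sum_congr rfl fun i _ => by ring
    have e4 : (∑ r : Fin m, C r μ * v r) = ∑ i : Fin m, v i * C i μ :=
      Finset.sum_congr rfl fun i _ => by ring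
    rw [e1, e2, e3, e4]; ring
  have h2 : (∑ i : Fin m, v i * ∑ μ : Fin k, C i μ * (∑ r : Fin m, aa μ r * v r))
      = ∑ i : Fin m, v i * ∑ μ : Fin k, aa μ i * (∑ r : Fin m, C r μ * v r) :=
    calc (∑ i : Fin m, v i * ∑ μ : Fin k, C i μ * (∑ r : Fin m, aa μ r * v r))
        = ∑ i : Fin m, ∑ μ : Fin k, v i * (C i μ * (∑ r : Fin m, aa μ r * v r)) :=
          Finset.sum_congr rfl fun i _ => Finset.mul_sum _ _ _
      _ = ∑ μ : Fin k, ∑ i : Fin m, v i * (C i μ * (∑ r : Fin m, aa μ r * v r)) :=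
          Finset.sum_comm
      _ = ∑ μ : Fin k, ∑ i : Fin m, v i * (aa μ i * (∑ r : Fin m, C r μ * v r)) :=
          Finset.sum_congr rfl fun μ _ => key μ
      _ = ∑ i : Fin m, ∑ μ : Fin k, v i * (aa μ i * (∑ r : Fin m, C r μ * v r)) :=
          Finset.sum_comm
      _ = ∑ i : Fin m, v i * ∑ μ : Fin k, aa μ i * (∑ r : Fin m, C r μ * v r) :=
          Finset.sum_congr rfl fun i _ => (Finset.mul_sum _ _ _).symm
  have expand : ∀ i : Fin m, v i * ((∑ r : Fin m, A i r * v r) - (∑ r : Fin m, A r i * v r)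
        + (∑ μ : Fin k, (C i μ * (∑ r : Fin m, aa μ r * v r)
            - aa μ i * (∑ r : Fin m, C r μ * v r)))
        + D i)
      = v i * (∑ r : Fin m, A i r * v r) - v i * (∑ r : Fin m, A r i * v r)
        + (v i * (∑ μ : Fin k, C i μ * (∑ r : Fin m, aa μ r * v r))
           - v i * (∑ μ : Fin k, aa μ i * (∑ r : Fin m, C r μ * v r)))
        + v i * D i := by
    intro i
    rw [Finset.sum_sub_distrib]
    ring
  rw [Finset.sum_congr rfl fun i _ => expand i]
  simp only [Finset.sum_add_distrib, Finset.sum_sub_distrib]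
  rw [h1, h2]
  ring

end BcoefSimp
section BcoefSum
variable {a : Fin k → Fin m → (Fin (m + k) → ℝ) × ℝ → ℝ}
  {α : Fin k → PhasePt (m + k) m → ℝ}

lemma sum_v_Bcoef (ha : ∀ ν j, ContDiff ℝ 2 (a ν j))
    (hαdef : ∀ ν p, α ν p = ∑ j : Fin m, a ν j (p.1, p.2.2) * p.2.1 j)
    (q : ℝ → Fin (m + k) → ℝ) (t : ℝ) (ν : Fin k) :
    ∑ i : Fin m, ivel q t i * Bcoef α q t ν i
      = ∑ i : Fin m, ivel q t i * ptU (a ν i) (q t, t) := by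
  have hB : ∀ i : Fin m, Bcoef α q t ν i
      = (∑ r : Fin m, pqU (a ν i) (Fin.castAdd k r) (q t, t) * ivel q t r)
        - (∑ r : Fin m, pqU (a ν r) (Fin.castAdd k i) (q t, t) * ivel q t r)
        + (∑ μ : Fin k, (pqU (a ν i) (Fin.natAdd m μ) (q t, t)
              * (∑ r : Fin m, a μ r (q t, t) * ivel q t r)
            - a μ i (q t, t)
              * (∑ r : Fin m, pqU (a ν r) (Fin.natAdd m μ) (q t, t) * ivel q t r)))
        + ptU (a ν i) (q t, t) := by
    intro i
    rw [Bcoef]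
    simp only [pq_pvalpha ha hαdef, pv_pvalpha ha hαdef, ptime_pvalpha ha hαdef,
      pq_alpha ha hαdef, pv_alpha ha hαdef, hαdef, plift, zero_mul, add_zero]
  have halg := alg_cancel (ivel q t)
    (fun i r => pqU (a ν i) (Fin.castAdd k r) (q t, t))
    (fun i μ => pqU (a ν i) (Fin.natAdd m μ) (q t, t))
    (fun μ r => a μ r (q t, t))
    (fun i => ptU (a ν i) (q t, t))
  rw [← halg]
  exact Finset.sum_congr rfl fun i _ => by rw [hB i]
end BcoefSum
section LagStuff
variable {α : Fin k → PhasePt (m + k) m → ℝ}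
  {T : PhasePt (m + k) (m + k) → ℝ} {U : (Fin (m + k) → ℝ) × ℝ → ℝ}

lemma extVel_contDiff (hα : ∀ ν, ContDiff ℝ 2 (α ν)) : ContDiff ℝ 2 (extVel α) := by
  rw [contDiff_pi]
  intro j
  refine Fin.addCases (motive := fun j => ContDiff ℝ 2 fun p : PhasePt (m + k) m => extVel α p j)
    ?_ ?_ j
  · intro i
    simp only [extVel, Fin.append_left]
    exact (projV (m + k) m i).contDiff
  · intro ν
    simp only [extVel, Fin.append_right]
    exact hα ν

lemma subst_contDiff (hT : ContDiff ℝ 2 T) (hα : ∀ ν, ContDiff ℝ 2 (α ν)) :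
    ContDiff ℝ 2 (subst α T) := by
  have hin : ContDiff ℝ 2 (fun p : PhasePt (m + k) m => (p.1, extVel α p, p.2.2)) :=
    contDiff_fst.prodMk ((extVel_contDiff hα).prodMk
      ((ContinuousLinearMap.snd ℝ (Fin m → ℝ) ℝ).comp
        (ContinuousLinearMap.snd ℝ (Fin (m + k) → ℝ) ((Fin m → ℝ) × ℝ))).contDiff)
  exact hT.comp hin

lemma Lag_contDiff (hT : ContDiff ℝ 2 T) (hU : ContDiff ℝ 2 U)
    (hα : ∀ ν, ContDiff ℝ 2 (α ν)) : ContDiff ℝ 2 (Lag α T U) :=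
  (subst_contDiff hT hα).add (hU.comp (projQT (m + k) m).contDiff)

lemma pv_Lag (hT : ContDiff ℝ 2 T) (hU : ContDiff ℝ 2 U) (hα : ∀ ν, ContDiff ℝ 2 (α ν))
    (i : Fin m) (p : PhasePt (m + k) m) :
    pv (Lag α T U) i p = pv (subst α T) i p := by
  have h1 : DifferentiableAt ℝ (subst α T) p :=
    (subst_contDiff hT hα).differentiable (by norm_num) p
  have h2 : DifferentiableAt ℝ (fun p : PhasePt (m + k) m => U (p.1, p.2.2)) p :=
    (hU.comp (projQT (m + k) m).contDiff).differentiable (by norm_num) p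
  have : Lag α T U = fun p : PhasePt (m + k) m => subst α T p + U (p.1, p.2.2) := rfl
  rw [this, pv, fderiv_add_apply _ _ _ _ h1 h2, ← pv, ← pv,
    pv_pull U p i (hU.differentiable (by norm_num) _), add_zero]

lemma pq_Lag (hT : ContDiff ℝ 2 T) (hU : ContDiff ℝ 2 U) (hα : ∀ ν, ContDiff ℝ 2 (α ν))
    (j : Fin (m + k)) (p : PhasePt (m + k) m) :
    pq (Lag α T U) j p = pq (subst α T) j p + pqU U j (p.1, p.2.2) := by
  have h1 : DifferentiableAt ℝ (subst α T) p :=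
    (subst_contDiff hT hα).differentiable (by norm_num) p
  have h2 : DifferentiableAt ℝ (fun p : PhasePt (m + k) m => U (p.1, p.2.2)) p :=
    (hU.comp (projQT (m + k) m).contDiff).differentiable (by norm_num) p
  have : Lag α T U = fun p : PhasePt (m + k) m => subst α T p + U (p.1, p.2.2) := rfl
  rw [this, pq, fderiv_add_apply _ _ _ _ h1 h2, ← pq, ← pq,
    pq_pull U p j (hU.differentiable (by norm_num) _)]

end LagStuff
/-- energy balance (26) for linear nonholonomic constraints.
For linear constraints `α ν = ∑ j a ν j (q, t) q̇ j`, along every admissible `C²`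
solution of the Voronec equations of motion one has
`d/dt(∑ i q̇ i ∂L*/∂q̇ i − L*) = − ∂L*/∂t + ∑ ν ∑ i q̇ i (∂T/∂q̇ (m+ν)) (∂a ν i/∂t)`. -/
theorem energy_balance_linear_constraints
    (m k : ℕ) (hm : 1 ≤ m) (hk : 1 ≤ k)
    (a : Fin k → Fin m → (Fin (m + k) → ℝ) × ℝ → ℝ) (ha : ∀ ν j, ContDiff ℝ 2 (a ν j))
    (α : Fin k → PhasePt (m + k) m → ℝ)
    (hαdef : ∀ (ν : Fin k) (p : PhasePt (m + k) m),
      α ν p = ∑ j : Fin m, a ν j (p.1, p.2.2) * p.2.1 j)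
    (T : PhasePt (m + k) (m + k) → ℝ) (hT : ContDiff ℝ 2 T)
    (U : (Fin (m + k) → ℝ) × ℝ → ℝ) (hU : ContDiff ℝ 2 U)
    (q : ℝ → Fin (m + k) → ℝ) (hq : ContDiff ℝ 2 q)
    (hadm : Admissible α q)
    (heom : ∀ (t : ℝ) (i : Fin m),
      deriv (fun s => pv (subst α T) i (plift q s)) t
        - pq (subst α T) (Fin.castAdd k i) (plift q t)
        - (∑ ν : Fin k, pq (subst α T) (Fin.natAdd m ν) (plift q t) * a ν i (q t, t))
        - (∑ ν : Fin k, Bcoef α q t ν i * pvT α T ν (plift q t)) =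
      pqU U (Fin.castAdd k i) (q t, t)
        + ∑ ν : Fin k, a ν i (q t, t) * pqU U (Fin.natAdd m ν) (q t, t)) :
    ∀ t : ℝ,
      deriv (fun s => energy (Lag α T U) q s) t =
        - ptime (Lag α T U) (plift q t)
          + ∑ ν : Fin k, ∑ i : Fin m,
              ivel q t i * pvT α T ν (plift q t) * ptU (a ν i) (q t, t) := by
  intro t
  have hαC : ∀ ν, ContDiff ℝ 2 (α ν) := alpha_contDiff ha hαdef
  have hTs : ContDiff ℝ 2 (subst α T) := subst_contDiff hT hαC
  have hLC : ContDiff ℝ 2 (Lag α T U) := Lag_contDiff hT hU hαC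
  have hpliftd : HasDerivAt (plift q) (deriv q t, iacc q t, 1) t := hasDerivAt_plift hq t
  have hpvC : ∀ i : Fin m, ContDiff ℝ 1 (fun p : PhasePt (m + k) m => pv (subst α T) i p) := by
    intro i
    exact (hTs.fderiv_right (by norm_num)).clm_apply contDiff_const
  have hc : ∀ i : Fin m, HasDerivAt (fun s => pv (subst α T) i (plift q s))
      (deriv (fun s => pv (subst α T) i (plift q s)) t) t := by
    intro i
    exact DifferentiableAt.hasDerivAt
      (((hpvC i).differentiable one_ne_zero (plift q t)).comp t hpliftd.differentiableAt)
  have hvel : ∀ i : Fin m, HasDerivAt (fun s => ivel q s i) (iacc q t i) t := by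
    intro i
    exact (ContinuousLinearMap.proj (R := ℝ) (φ := fun _ : Fin m => ℝ)
      i).hasFDerivAt.comp_hasDerivAt t (hasDerivAt_ivel hq t)
  have hterm : ∀ i : Fin m, HasDerivAt
      (fun s => ivel q s i * pv (Lag α T U) i (plift q s))
      (iacc q t i * pv (Lag α T U) i (plift q t)
        + ivel q t i * deriv (fun s => pv (subst α T) i (plift q s)) t) t := by
    intro i
    have heq : (fun s => pv (Lag α T U) i (plift q s))
        = fun s => pv (subst α T) i (plift q s) :=
      funext fun s => pv_Lag hT hU hαC i (plift q s)
    have hmain : HasDerivAt (fun s => ivel q s i * pv (subst α T) i (plift q s))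
        (iacc q t i * pv (subst α T) i (plift q t)
          + ivel q t i * deriv (fun s => pv (subst α T) i (plift q s)) t) t :=
      (hvel i).mul (hc i)
    rw [show (fun s => ivel q s i * pv (Lag α T U) i (plift q s))
        = fun s => ivel q s i * pv (subst α T) i (plift q s) from
        funext fun s => by rw [pv_Lag hT hU hαC i (plift q s)],
      pv_Lag hT hU hαC i (plift q t)]
    exact hmain
  have hsum : HasDerivAt (fun s => ∑ i : Fin m, ivel q s i * pv (Lag α T U) i (plift q s))
      (∑ i : Fin m, (iacc q t i * pv (Lag α T U) i (plift q t)
        + ivel q t i * deriv (fun s => pv (subst α T) i (plift q s)) t)) t :=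
    HasDerivAt.fun_sum fun i _ => hterm i
  have hLcurve : HasDerivAt (fun s => Lag α T U (plift q s))
      ((∑ j : Fin (m + k), deriv q t j * pq (Lag α T U) j (plift q t))
        + (∑ i : Fin m, iacc q t i * pv (Lag α T U) i (plift q t))
        + ptime (Lag α T U) (plift q t)) t :=
    hasDerivAt_comp_plift hq t _ (hLC.differentiable (by norm_num) (plift q t))
  have hE : HasDerivAt (fun s => energy (Lag α T U) q s)
      ((∑ i : Fin m, (iacc q t i * pv (Lag α T U) i (plift q t)
          + ivel q t i * deriv (fun s => pv (subst α T) i (plift q s)) t))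
        - ((∑ j : Fin (m + k), deriv q t j * pq (Lag α T U) j (plift q t))
            + (∑ i : Fin m, iacc q t i * pv (Lag α T U) i (plift q t))
            + ptime (Lag α T U) (plift q t))) t := by
    have h := hsum.fun_sub hLcurve
    simpa [energy] using h
  rw [hE.deriv]
  have hsplit : (∑ j : Fin (m + k), deriv q t j * pq (Lag α T U) j (plift q t))
      = (∑ i : Fin m, ivel q t i * pq (Lag α T U) (Fin.castAdd k i) (plift q t))
        + ∑ ν : Fin k, α ν (plift q t) * pq (Lag α T U) (Fin.natAdd m ν) (plift q t) := by
    rw [Fin.sum_univ_add]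
    congr 1
    exact Finset.sum_congr rfl fun ν _ => by rw [hadm t ν]
  have hceq : ∀ i : Fin m, deriv (fun s => pv (subst α T) i (plift q s)) t
      = pq (Lag α T U) (Fin.castAdd k i) (plift q t)
        + (∑ ν : Fin k, pq (Lag α T U) (Fin.natAdd m ν) (plift q t) * a ν i (q t, t))
        + ∑ ν : Fin k, Bcoef α q t ν i * pvT α T ν (plift q t) := by
    intro i
    have h0 := heom t i
    have h1 : ∀ j : Fin (m + k), pq (Lag α T U) j (plift q t)
        = pq (subst α T) j (plift q t) + pqU U j (q t, t) := fun j =>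
      pq_Lag hT hU hαC j (plift q t)
    have h2 : (∑ ν : Fin k, pq (Lag α T U) (Fin.natAdd m ν) (plift q t) * a ν i (q t, t))
        = (∑ ν : Fin k, pq (subst α T) (Fin.natAdd m ν) (plift q t) * a ν i (q t, t))
          + ∑ ν : Fin k, a ν i (q t, t) * pqU U (Fin.natAdd m ν) (q t, t) := by
      rw [← Finset.sum_add_distrib]
      exact Finset.sum_congr rfl fun ν _ => by rw [h1]; ring
    rw [h1, h2]
    linarith [h0]
  have hswap1 : (∑ i : Fin m, ivel q t i
        * ∑ ν : Fin k, pq (Lag α T U) (Fin.natAdd m ν) (plift q t) * a ν i (q t, t))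
      = ∑ ν : Fin k, α ν (plift q t) * pq (Lag α T U) (Fin.natAdd m ν) (plift q t) := by
    calc (∑ i : Fin m, ivel q t i
          * ∑ ν : Fin k, pq (Lag α T U) (Fin.natAdd m ν) (plift q t) * a ν i (q t, t))
        = ∑ i : Fin m, ∑ ν : Fin k, ivel q t i
            * (pq (Lag α T U) (Fin.natAdd m ν) (plift q t) * a ν i (q t, t)) :=
          Finset.sum_congr rfl fun i _ => Finset.mul_sum _ _ _
      _ = ∑ ν : Fin k, ∑ i : Fin m, ivel q t i
            * (pq (Lag α T U) (Fin.natAdd m ν) (plift q t) * a ν i (q t, t)) :=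
          Finset.sum_comm
      _ = ∑ ν : Fin k, α ν (plift q t) * pq (Lag α T U) (Fin.natAdd m ν) (plift q t) := by
          refine Finset.sum_congr rfl fun ν _ => ?_
          have hν : α ν (plift q t) = ∑ j : Fin m, a ν j (q t, t) * ivel q t j :=
            hαdef ν (plift q t)
          rw [hν, Finset.sum_mul]
          exact Finset.sum_congr rfl fun i _ => by ring
  have hswap2 : (∑ i : Fin m, ivel q t i
        * ∑ ν : Fin k, Bcoef α q t ν i * pvT α T ν (plift q t))
      = ∑ ν : Fin k, ∑ i : Fin m,
          ivel q t i * pvT α T ν (plift q t) * ptU (a ν i) (q t, t) := by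
    calc (∑ i : Fin m, ivel q t i
          * ∑ ν : Fin k, Bcoef α q t ν i * pvT α T ν (plift q t))
        = ∑ i : Fin m, ∑ ν : Fin k,
            ivel q t i * (Bcoef α q t ν i * pvT α T ν (plift q t)) :=
          Finset.sum_congr rfl fun i _ => Finset.mul_sum _ _ _
      _ = ∑ ν : Fin k, ∑ i : Fin m,
            ivel q t i * (Bcoef α q t ν i * pvT α T ν (plift q t)) := Finset.sum_comm
      _ = ∑ ν : Fin k, (∑ i : Fin m, ivel q t i * Bcoef α q t ν i)
            * pvT α T ν (plift q t) := by
          refine Finset.sum_congr rfl fun ν _ => ?_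
          rw [Finset.sum_mul]
          exact Finset.sum_congr rfl fun i _ => by ring
      _ = ∑ ν : Fin k, (∑ i : Fin m, ivel q t i * ptU (a ν i) (q t, t))
            * pvT α T ν (plift q t) := by
          refine Finset.sum_congr rfl fun ν _ => ?_
          rw [sum_v_Bcoef ha hαdef q t ν]
      _ = ∑ ν : Fin k, ∑ i : Fin m,
            ivel q t i * pvT α T ν (plift q t) * ptU (a ν i) (q t, t) := by
          refine Finset.sum_congr rfl fun ν _ => ?_
          rw [Finset.sum_mul]
          exact Finset.sum_congr rfl fun i _ => by ring
  have hvc : (∑ i : Fin m, ivel q t i * deriv (fun s => pv (subst α T) i (plift q s)) t)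
      = (∑ i : Fin m, ivel q t i * pq (Lag α T U) (Fin.castAdd k i) (plift q t))
        + (∑ ν : Fin k, α ν (plift q t) * pq (Lag α T U) (Fin.natAdd m ν) (plift q t))
        + ∑ ν : Fin k, ∑ i : Fin m,
            ivel q t i * pvT α T ν (plift q t) * ptU (a ν i) (q t, t) := by
    rw [← hswap1, ← hswap2, ← Finset.sum_add_distrib, ← Finset.sum_add_distrib]
    refine Finset.sum_congr rfl fun i _ => ?_
    rw [hceq i]
    ring
  rw [hsplit]
  rw [Finset.sum_add_distrib, hvc]
  ring

end
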